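/- arXiv:1703.02100 — 3 statements merged into one kernel-verified Lean document; each statement's English description precedes it below -/
import Mathlib

section
/- Let K ≥ 2, α ∈ [0,1], γ ∈ (0,1], and let F be the tightness function on the ground set V = {s_1,…,s_K} ∪ {ω_1,…,ω_K}. Then F has generalized curvature exactly α: (i) F((S\{i}) ∪ Ω ∪ {i}) − F((S\{i}) ∪ Ω) ≥ (1 − α)·(F(S) − F(S\{i})) for all Ω, S ⊆ V and i ∈ S\Ω; and (ii) equality is attained with positive marginal gains, e.g., for S = {s_j} (any j), i = s_j, and Ω = {ω_1,…,ω_K}, where F(Ω ∪ {s_j}) − F(Ω) = (1 − α)·ξ_j and F({s_j}) − F(∅) = ξ_j > 0. -/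
open Finset

/-- `ξ_i := (1/K)·((K − γα)/K)^{i}` (0-indexed, so `xi K α γ i` is the paper's `ξ_{i+1}`). -/
noncomputable def xi (K : ℕ) (α γ : ℝ) (i : Fin K) : ℝ :=
  (1 / (K : ℝ)) * (((K : ℝ) - γ * α) / (K : ℝ)) ^ (i : ℕ)

/-- `f(x) := ((γ⁻¹ − 1)/(K − 1))·x² + ((K − γ⁻¹)/(K − 1))·x`. -/
noncomputable def fconv (K : ℕ) (γ : ℝ) (x : ℝ) : ℝ :=
  ((γ⁻¹ - 1) / ((K : ℝ) - 1)) * x ^ 2 + (((K : ℝ) - γ⁻¹) / ((K : ℝ) - 1)) * x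

/-- The tightness function on the ground set `V = {s_1,…,s_K} ∪ {ω_1,…,ω_K}`,
modeled as `Fin K ⊕ Fin K` with `Sum.inl i = s_{i+1}` and `Sum.inr i = ω_{i+1}`:
`F(T) = (f(|T ∩ Ω|)/K)·(1 − αγ·Σ_{i : s_i ∈ T} ξ_i) + Σ_{i : s_i ∈ T} ξ_i`. -/
noncomputable def tightF (K : ℕ) (α γ : ℝ) (T : Finset (Fin K ⊕ Fin K)) : ℝ :=
  (fconv K γ (((Finset.univ.filter (fun i : Fin K => Sum.inr i ∈ T)).card : ℝ)) / (K : ℝ)) *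
      (1 - α * γ * ∑ i ∈ Finset.univ.filter (fun i : Fin K => Sum.inl i ∈ T), xi K α γ i) +
    ∑ i ∈ Finset.univ.filter (fun i : Fin K => Sum.inl i ∈ T), xi K α γ i

section aux
variable {K : ℕ} {α γ : ℝ}

lemma xi_pos (hK : 2 ≤ K) (hα0 : 0 ≤ α) (hα1 : α ≤ 1) (hγ0 : 0 < γ) (hγ1 : γ ≤ 1)
    (i : Fin K) : 0 < xi K α γ i := by
  have hK2 : (2:ℝ) ≤ K := by exact_mod_cast hK
  have h1 : γ * α ≤ 1 := by nlinarith
  have h2 : (0:ℝ) < ((K : ℝ) - γ * α) / (K : ℝ) := by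
    apply div_pos <;> nlinarith
  unfold xi
  positivity

lemma xi_nonneg (hK : 2 ≤ K) (hα0 : 0 ≤ α) (hα1 : α ≤ 1) (hγ0 : 0 < γ) (hγ1 : γ ≤ 1)
    (i : Fin K) : 0 ≤ xi K α γ i := (xi_pos hK hα0 hα1 hγ0 hγ1 i).le

lemma sum_xi_nonneg (hK : 2 ≤ K) (hα0 : 0 ≤ α) (hα1 : α ≤ 1) (hγ0 : 0 < γ) (hγ1 : γ ≤ 1)
    (t : Finset (Fin K)) : 0 ≤ ∑ i ∈ t, xi K α γ i :=
  Finset.sum_nonneg fun i _ => xi_nonneg hK hα0 hα1 hγ0 hγ1 i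

lemma sum_xi_le (hK : 2 ≤ K) (hα0 : 0 ≤ α) (hα1 : α ≤ 1) (hγ0 : 0 < γ) (hγ1 : γ ≤ 1)
    (t : Finset (Fin K)) : α * γ * ∑ i ∈ t, xi K α γ i ≤ α := by
  have hK2 : (2:ℝ) ≤ K := by exact_mod_cast hK
  have hKpos : (0:ℝ) < K := by linarith
  set r : ℝ := ((K : ℝ) - γ * α) / (K : ℝ) with hr
  have hsub : ∑ i ∈ t, xi K α γ i ≤ ∑ i : Fin K, xi K α γ i :=
    Finset.sum_le_sum_of_subset_of_nonneg (Finset.subset_univ t)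
      (fun i _ _ => xi_nonneg hK hα0 hα1 hγ0 hγ1 i)
  have huniv : ∑ i : Fin K, xi K α γ i = ∑ i ∈ range K, (1/(K:ℝ)) * r ^ i := by
    rw [← Fin.sum_univ_eq_sum_range (fun i => (1/(K:ℝ)) * r ^ i) K]
    rfl
  have h1r : α * γ * (1/(K:ℝ)) = 1 - r := by field_simp [hr]; rw [hr]; linear_combination div_mul_cancel₀ ((K:ℝ) - γ*α) hKpos.ne'
  have hgeom : α * γ * ∑ i : Fin K, xi K α γ i = 1 - r ^ K := by
    rw [huniv, ← Finset.mul_sum]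
    calc α * γ * ((1/(K:ℝ)) * ∑ i ∈ range K, r ^ i)
        = (α * γ * (1/(K:ℝ))) * ∑ i ∈ range K, r ^ i := by ring
      _ = -((∑ i ∈ range K, r ^ i) * (r - 1)) := by rw [h1r]; ring
      _ = 1 - r ^ K := by rw [geom_sum_mul]; ring
  have hr0 : 1 - α/K ≤ r := by
    rw [hr, le_div_iff₀ hKpos]
    have h := div_mul_cancel₀ α (ne_of_gt hKpos)
    nlinarith [mul_nonneg hα0 (sub_nonneg.2 hγ1)]
  have h00 : (0:ℝ) ≤ 1 - α/K := by
    rw [sub_nonneg, div_le_one hKpos]; linarith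
  have hb : 1 - α ≤ (1 - α/K)^K := by
    have hber := one_add_mul_le_pow (a := -(α/K))
      (by nlinarith [div_nonneg hα0 hKpos.le] : (-2:ℝ) ≤ -(α/K)) K
    have e1 : 1 + (K:ℝ) * -(α/K) = 1 - α := by field_simp; ring
    have e2 : (1:ℝ) + -(α/K) = 1 - α/K := by ring
    rw [e1, e2] at hber
    exact hber
  have hpow : (1 - α/K)^K ≤ r^K := pow_le_pow_left₀ h00 hr0 K
  have hmul := mul_le_mul_of_nonneg_left hsub (mul_nonneg hα0 hγ0.le)
  linarith [hmul, hgeom]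

lemma fconv_nonneg (hK : 2 ≤ K) (hγ0 : 0 < γ) (hγ1 : γ ≤ 1) (n : ℕ) :
    0 ≤ fconv K γ (n:ℝ) := by
  have hK2 : (2:ℝ) ≤ K := by exact_mod_cast hK
  have hinv : (1:ℝ) ≤ γ⁻¹ := (one_le_inv₀ hγ0).mpr hγ1
  have hd : (0:ℝ) < (K:ℝ) - 1 := by linarith
  rcases Nat.eq_zero_or_pos n with h | h
  · simp [fconv, h]
  · have hn1 : (1:ℝ) ≤ n := by exact_mod_cast h
    unfold fconv
    rw [div_mul_eq_mul_div, div_mul_eq_mul_div, ← add_div]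
    apply div_nonneg _ hd.le
    nlinarith [mul_nonneg (sub_nonneg.2 hinv)
      (mul_nonneg (by linarith : (0:ℝ) ≤ (n:ℝ)) (by linarith : (0:ℝ) ≤ (n:ℝ) - 1))]

lemma fconv_le (hK : 2 ≤ K) (hγ0 : 0 < γ) (hγ1 : γ ≤ 1) (n : ℕ) (hn : n ≤ K) :
    γ * fconv K γ (n:ℝ) ≤ K := by
  have hK2 : (2:ℝ) ≤ K := by exact_mod_cast hK
  have hnK : (n:ℝ) ≤ K := by exact_mod_cast hn
  have hn0 : (0:ℝ) ≤ n := Nat.cast_nonneg n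
  have hd : (0:ℝ) < (K:ℝ) - 1 := by linarith
  rw [← mul_le_mul_iff_left₀ hd]
  have hexp : γ * fconv K γ (n:ℝ) * ((K:ℝ) - 1) = (1 - γ) * (n:ℝ)^2 + (γ * K - 1) * n := by
    unfold fconv; field_simp
  rw [hexp]
  nlinarith [mul_nonneg (sub_nonneg.2 hnK) (mul_nonneg (sub_nonneg.2 hγ1) hn0),
    mul_nonneg (sub_nonneg.2 hnK) (by linarith : (0:ℝ) ≤ (K:ℝ) - 1)]

lemma fconv_marg_nonneg (hK : 2 ≤ K) (hγ0 : 0 < γ) (hγ1 : γ ≤ 1) (n : ℕ) :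
    0 ≤ fconv K γ ((n:ℝ)+1) - fconv K γ (n:ℝ) := by
  have hK2 : (2:ℝ) ≤ K := by exact_mod_cast hK
  have hinv : (1:ℝ) ≤ γ⁻¹ := (one_le_inv₀ hγ0).mpr hγ1
  have hd : (0:ℝ) < (K:ℝ) - 1 := by linarith
  have hexp : fconv K γ ((n:ℝ)+1) - fconv K γ (n:ℝ)
      = (2 * (n:ℝ) * (γ⁻¹ - 1) + ((K:ℝ) - 1)) / ((K:ℝ) - 1) := by
    unfold fconv; field_simp; ring
  rw [hexp]
  apply div_nonneg _ hd.le
  nlinarith [mul_nonneg (Nat.cast_nonneg (α := ℝ) n) (sub_nonneg.2 hinv)]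

lemma fconv_marg_mono (hK : 2 ≤ K) (hγ0 : 0 < γ) (hγ1 : γ ≤ 1) (m n : ℕ) (hmn : m ≤ n) :
    fconv K γ ((m:ℝ)+1) - fconv K γ (m:ℝ) ≤ fconv K γ ((n:ℝ)+1) - fconv K γ (n:ℝ) := by
  have hK2 : (2:ℝ) ≤ K := by exact_mod_cast hK
  have hinv : (1:ℝ) ≤ γ⁻¹ := (one_le_inv₀ hγ0).mpr hγ1
  have hd : (0:ℝ) < (K:ℝ) - 1 := by linarith
  have hmn' : (m:ℝ) ≤ n := by exact_mod_cast hmn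
  have hexp : ∀ k : ℕ, fconv K γ ((k:ℝ)+1) - fconv K γ (k:ℝ)
      = (2 * (k:ℝ) * (γ⁻¹ - 1) + ((K:ℝ) - 1)) / ((K:ℝ) - 1) := by
    intro k; unfold fconv; field_simp; ring
  rw [hexp m, hexp n, div_le_div_iff_of_pos_right hd]
  nlinarith [mul_nonneg (sub_nonneg.2 hmn') (sub_nonneg.2 hinv)]

lemma filter_inl_insert_inl (T : Finset (Fin K ⊕ Fin K)) (j : Fin K) :
    univ.filter (fun i : Fin K => Sum.inl i ∈ insert (Sum.inl j) T)
      = insert j (univ.filter fun i : Fin K => Sum.inl i ∈ T) := by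
  ext i; simp [Finset.mem_insert]

lemma filter_inr_insert_inl (T : Finset (Fin K ⊕ Fin K)) (j : Fin K) :
    univ.filter (fun i : Fin K => Sum.inr i ∈ insert (Sum.inl j) T)
      = univ.filter (fun i : Fin K => Sum.inr i ∈ T) := by
  ext i; simp [Finset.mem_insert]

lemma filter_inl_insert_inr (T : Finset (Fin K ⊕ Fin K)) (j : Fin K) :
    univ.filter (fun i : Fin K => Sum.inl i ∈ insert (Sum.inr j) T)
      = univ.filter (fun i : Fin K => Sum.inl i ∈ T) := by
  ext i; simp [Finset.mem_insert]

lemma filter_inr_insert_inr (T : Finset (Fin K ⊕ Fin K)) (j : Fin K) :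
    univ.filter (fun i : Fin K => Sum.inr i ∈ insert (Sum.inr j) T)
      = insert j (univ.filter fun i : Fin K => Sum.inr i ∈ T) := by
  ext i; simp [Finset.mem_insert]

lemma tightF_insert_inl (T : Finset (Fin K ⊕ Fin K)) (j : Fin K) (hj : Sum.inl j ∉ T) :
    tightF K α γ (insert (Sum.inl j) T) - tightF K α γ T =
      xi K α γ j * (1 - α * γ *
        (fconv K γ (((univ.filter (fun i : Fin K => Sum.inr i ∈ T)).card : ℝ)) / (K:ℝ))) := by
  unfold tightF
  rw [filter_inl_insert_inl, filter_inr_insert_inl,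
    Finset.sum_insert (by simp [hj])]
  ring

lemma tightF_insert_inr (T : Finset (Fin K ⊕ Fin K)) (j : Fin K) (hj : Sum.inr j ∉ T) :
    tightF K α γ (insert (Sum.inr j) T) - tightF K α γ T =
      ((fconv K γ (((univ.filter (fun i : Fin K => Sum.inr i ∈ T)).card : ℝ) + 1)
          - fconv K γ (((univ.filter (fun i : Fin K => Sum.inr i ∈ T)).card : ℝ))) / (K:ℝ)) *
        (1 - α * γ * ∑ i ∈ univ.filter (fun i : Fin K => Sum.inl i ∈ T), xi K α γ i) := by
  unfold tightF
  rw [filter_inl_insert_inr, filter_inr_insert_inr,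
    Finset.card_insert_of_notMem (by simp [hj])]
  push_cast
  ring

end aux

/-- **The tightness function has generalized curvature exactly `α`.**
(i) `ρ_i((S\{i}) ∪ Ω) ≥ (1 − α)·ρ_i(S\{i})` for all `Ω, S` and `i ∈ S\Ω`;
(ii) equality is attained with positive marginal gains: for every `j`, taking
`S = {s_j}`, `i = s_j`, `Ω = {ω_1,…,ω_K}` gives
`F(Ω ∪ {s_j}) − F(Ω) = (1 − α)·ξ_j` and `F({s_j}) − F(∅) = ξ_j > 0`. -/
theorem tightF_generalized_curvature (K : ℕ) (hK : 2 ≤ K)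
    (α γ : ℝ) (hα0 : 0 ≤ α) (hα1 : α ≤ 1) (hγ0 : 0 < γ) (hγ1 : γ ≤ 1) :
    (∀ Ω S : Finset (Fin K ⊕ Fin K), ∀ i ∈ S, i ∉ Ω →
      tightF K α γ (insert i ((S.erase i) ∪ Ω)) - tightF K α γ ((S.erase i) ∪ Ω) ≥
        (1 - α) * (tightF K α γ S - tightF K α γ (S.erase i))) ∧
    (∀ j : Fin K,
      tightF K α γ (insert (Sum.inl j)
          (Finset.univ.image (Sum.inr : Fin K → Fin K ⊕ Fin K))) -
        tightF K α γ (Finset.univ.image (Sum.inr : Fin K → Fin K ⊕ Fin K)) =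
          (1 - α) * xi K α γ j ∧
      tightF K α γ {Sum.inl j} - tightF K α γ ∅ = xi K α γ j ∧
      0 < xi K α γ j) := by
  have hK2 : (2:ℝ) ≤ K := by exact_mod_cast hK
  have hKpos : (0:ℝ) < K := by linarith
  have hcard : ∀ T : Finset (Fin K ⊕ Fin K),
      (univ.filter (fun i : Fin K => Sum.inr i ∈ T)).card ≤ K := by
    intro T
    simpa using Finset.card_filter_le univ (fun i : Fin K => Sum.inr i ∈ T)
  have hA : ∀ n : ℕ, n ≤ K → α * γ * (fconv K γ (n:ℝ) / K) ≤ α := by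
    intro n hn
    have h1 : γ * fconv K γ (n:ℝ) ≤ K := fconv_le hK hγ0 hγ1 n hn
    rw [show α * γ * (fconv K γ (n:ℝ)/K) = α * ((γ * fconv K γ (n:ℝ))/K) by ring]
    calc α * ((γ * fconv K γ (n:ℝ))/K) ≤ α * 1 :=
          mul_le_mul_of_nonneg_left (div_le_one_of_le₀ h1 hKpos.le) hα0
      _ = α := mul_one α
  have hB : ∀ n : ℕ, 0 ≤ α * γ * (fconv K γ (n:ℝ)/K) := fun n =>
    mul_nonneg (mul_nonneg hα0 hγ0.le)
      (div_nonneg (fconv_nonneg hK hγ0 hγ1 n) hKpos.le)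
  constructor
  · intro Ω S i hiS hiΩ
    have hiS' : i ∉ S.erase i := Finset.notMem_erase i S
    have hiA : i ∉ S.erase i ∪ Ω := by
      simp only [Finset.mem_union, not_or]
      exact ⟨hiS', hiΩ⟩
    rcases i with j | j
    · -- i = s_j
      have h1 := tightF_insert_inl (α := α) (γ := γ) (S.erase (Sum.inl j) ∪ Ω) j hiA
      have h2 := tightF_insert_inl (α := α) (γ := γ) (S.erase (Sum.inl j)) j hiS'
      rw [Finset.insert_erase hiS] at h2
      rw [ge_iff_le, h1, h2]
      set bA := (univ.filter (fun i : Fin K => Sum.inr i ∈ S.erase (Sum.inl j) ∪ Ω)).card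
      set b' := (univ.filter (fun i : Fin K => Sum.inr i ∈ S.erase (Sum.inl j))).card
      have hx0 : 0 ≤ xi K α γ j := xi_nonneg hK hα0 hα1 hγ0 hγ1 j
      have hu := hA bA (hcard _)
      have hv := hB b'
      nlinarith [mul_nonneg hx0 (sub_nonneg.2 hu),
        mul_nonneg (mul_nonneg hx0 (sub_nonneg.2 hα1)) hv]
    · -- i = ω_j
      have h1 := tightF_insert_inr (α := α) (γ := γ) (S.erase (Sum.inr j) ∪ Ω) j hiA
      have h2 := tightF_insert_inr (α := α) (γ := γ) (S.erase (Sum.inr j)) j hiS'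
      rw [Finset.insert_erase hiS] at h2
      rw [ge_iff_le, h1, h2]
      set bA := (univ.filter (fun i : Fin K => Sum.inr i ∈ S.erase (Sum.inr j) ∪ Ω)).card with hbA
      set b' := (univ.filter (fun i : Fin K => Sum.inr i ∈ S.erase (Sum.inr j))).card with hb'
      set DA := fconv K γ ((bA:ℝ)+1) - fconv K γ (bA:ℝ) with hDA
      set D' := fconv K γ ((b':ℝ)+1) - fconv K γ (b':ℝ) with hD'
      set vA := α * γ * ∑ i ∈ univ.filter (fun i : Fin K => Sum.inl i ∈ S.erase (Sum.inr j) ∪ Ω),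
        xi K α γ i with hvA
      set v' := α * γ * ∑ i ∈ univ.filter (fun i : Fin K => Sum.inl i ∈ S.erase (Sum.inr j)),
        xi K α γ i with hv'
      have hbb : b' ≤ bA := by
        apply Finset.card_le_card
        intro x hx
        simp only [Finset.mem_filter, Finset.mem_union] at hx ⊢
        exact ⟨hx.1, Or.inl hx.2⟩
      have hD'0 : 0 ≤ D' := fconv_marg_nonneg hK hγ0 hγ1 b'
      have hDm : D' ≤ DA := fconv_marg_mono hK hγ0 hγ1 b' bA hbb
      have hvAle : vA ≤ α := sum_xi_le hK hα0 hα1 hγ0 hγ1 _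
      have hv'0 : 0 ≤ v' :=
        mul_nonneg (mul_nonneg hα0 hγ0.le) (sum_xi_nonneg hK hα0 hα1 hγ0 hγ1 _)
      have h1vA : 0 ≤ 1 - vA := by linarith
      have key : (1 - α) * (D' * (1 - v')) ≤ DA * (1 - vA) := by
        nlinarith [mul_nonneg (sub_nonneg.2 hDm) h1vA,
          mul_nonneg hD'0 (sub_nonneg.2 hvAle),
          mul_nonneg (mul_nonneg (sub_nonneg.2 hα1) hD'0) hv'0]
      calc (1 - α) * (D' / (K:ℝ) * (1 - v')) = ((1 - α) * (D' * (1 - v'))) / K := by ring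
        _ ≤ (DA * (1 - vA)) / K := by gcongr
        _ = DA / (K:ℝ) * (1 - vA) := by ring
  · intro j
    refine ⟨?_, ?_, xi_pos hK hα0 hα1 hγ0 hγ1 j⟩
    · have hj : Sum.inl j ∉ (univ.image (Sum.inr : Fin K → Fin K ⊕ Fin K)) := by simp
      rw [tightF_insert_inl _ j hj]
      have hfil : (univ.filter (fun i : Fin K =>
          Sum.inr i ∈ univ.image (Sum.inr : Fin K → Fin K ⊕ Fin K))).card = K := by
        simp
      rw [hfil]
      have hfK : fconv K γ (K:ℝ) = (K:ℝ)/γ := by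
        have hd : ((K:ℝ) - 1) ≠ 0 := by intro h; rw [sub_eq_zero] at h; linarith
        unfold fconv; field_simp; ring
      rw [hfK]
      field_simp
    · have e1 : (univ.filter (fun i : Fin K => Sum.inr i ∈ ({Sum.inl j} : Finset (Fin K ⊕ Fin K)))) = ∅ := by
        ext i; simp
      have e2 : (univ.filter (fun i : Fin K => Sum.inl i ∈ ({Sum.inl j} : Finset (Fin K ⊕ Fin K)))) = {j} := by
        ext i; simp
      unfold tightF
      rw [e1, e2]
      simp [fconv]
end

section
/- Let K ≥ 2, α ∈ (0,1], γ ∈ (0,1], and let F be the tightness function on the ground set V = {s_1,…,s_K} ∪ {ω_1,…,ω_K}. Write S^{t−1} := {s_1,…,s_{t−1}} for t = 1,…,K. Then: (i) for every t ∈ {1,…,K}, F(S^{t−1} ∪ {s_t}) − F(S^{t−1}) = ξ_t, F(S^{t−1} ∪ {ω_j}) − F(S^{t−1}) = ξ_t for every j ∈ {1,…,K}, and F(S^{t−1} ∪ {s_j}) − F(S^{t−1}) = ξ_j ≤ ξ_t for every j ≥ t (so the chain S⁰ ⊂ S¹ ⊂ ⋯ ⊂ S^K = {s_1,…,s_K}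 is a valid greedy sequence for F); (ii) F({s_1,…,s_K}) = (1/(αγ))·(1 − ((K − αγ)/K)^K) and F({ω_1,…,ω_K}) = 1/γ, so F({s_1,…,s_K}) / F({ω_1,…,ω_K}) = (1/α)·(1 − ((K − αγ)/K)^K), matching the greedy approximation guarantee exactly. -/
open Finset

/-- The greedy chain `S^t = {s_1,…,s_t}` (0-indexed: `Schain K t = {inl i : i < t}`). -/
def Schain (K : ℕ) (t : ℕ) : Finset (Fin K ⊕ Fin K) :=
  (Finset.univ.filter (fun i : Fin K => (i : ℕ) < t)).image Sum.inl
lemma sum_xi_eq (K : ℕ) (hK : 2 ≤ K) (α γ : ℝ) (hα0 : 0 < α) (hγ0 : 0 < γ)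
    (t : ℕ) (ht : t ≤ K) :
    ∑ i ∈ Finset.univ.filter (fun i : Fin K => (i:ℕ) < t), xi K α γ i
      = (1 - (((K:ℝ) - γ*α)/K)^t) / (α * γ) := by
  have hK0 : (K:ℝ) ≠ 0 := by
    have : (2:ℝ) ≤ (K:ℝ) := by exact_mod_cast hK
    linarith
  have hγα : 0 < γ * α := by positivity
  have hq : ((K:ℝ) - γ*α)/K ≠ 1 := by
    intro h
    rw [div_eq_iff hK0, one_mul] at h
    linarith
  have h1 : ∑ i ∈ Finset.univ.filter (fun i : Fin K => (i:ℕ) < t), xi K α γ i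
      = ∑ n ∈ Finset.range t, (1/(K:ℝ)) * (((K:ℝ)-γ*α)/K)^n := by
    rw [Finset.sum_filter]
    simp only [xi]
    rw [Fin.sum_univ_eq_sum_range
      (fun n => if n < t then (1/(K:ℝ)) * (((K:ℝ)-γ*α)/K)^n else 0) K]
    rw [← Finset.sum_filter]
    congr 1
    ext n
    simp only [Finset.mem_filter, Finset.mem_range]
    omega
  rw [h1, ← Finset.mul_sum, geom_sum_eq hq]
  have h2 : ((K:ℝ) - γ*α)/K - 1 = -(γ*α)/K := by field_simp; ring
  rw [h2]
  have hαγ : α * γ ≠ 0 := by positivity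
  field_simp
  ring

lemma filter_inl_Schain (K : ℕ) (t : ℕ) :
    (Finset.univ.filter (fun i : Fin K => Sum.inl i ∈ Schain K t))
      = Finset.univ.filter (fun i : Fin K => (i:ℕ) < t) := by
  ext i; simp [Schain]

lemma filter_inr_Schain (K : ℕ) (t : ℕ) :
    (Finset.univ.filter (fun i : Fin K => Sum.inr i ∈ Schain K t)) = ∅ := by
  ext i; simp [Schain]

lemma fconv_zero (K : ℕ) (γ : ℝ) : fconv K γ 0 = 0 := by simp [fconv]

lemma fconv_one (K : ℕ) (hK : 2 ≤ K) (γ : ℝ) : fconv K γ 1 = 1 := by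
  have hK1 : (K:ℝ) - 1 ≠ 0 := by
    have : (2:ℝ) ≤ (K:ℝ) := by exact_mod_cast hK
    linarith
  simp only [fconv, one_pow, mul_one]
  field_simp
  ring

lemma tightF_Schain (K : ℕ) (α γ : ℝ) (t : ℕ) :
    tightF K α γ (Schain K t)
      = ∑ i ∈ Finset.univ.filter (fun i : Fin K => (i:ℕ) < t), xi K α γ i := by
  rw [tightF, filter_inl_Schain, filter_inr_Schain]
  simp [fconv_zero]

/-- **The greedy algorithm may output `{s_1,…,s_K}` on the tightness function,
matching the approximation guarantee exactly.**
(i) At step `t` (0-indexed), the marginal gain of `s_t` is `ξ_t`, every `ω_j`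
also has marginal gain `ξ_t`, and every remaining `s_j` (`j ≥ t`) has marginal
gain `ξ_j ≤ ξ_t`; hence `∅ ⊂ S¹ ⊂ ⋯ ⊂ S^K = {s_1,…,s_K}` is a valid greedy
sequence. (ii) `F({s_1,…,s_K}) = (1/(αγ))(1 − ((K−αγ)/K)^K)`,
`F({ω_1,…,ω_K}) = 1/γ`, and their ratio is `(1/α)(1 − ((K−αγ)/K)^K)`. -/
theorem tightF_greedy_tightness (K : ℕ) (hK : 2 ≤ K)
    (α γ : ℝ) (hα0 : 0 < α) (hα1 : α ≤ 1) (hγ0 : 0 < γ) (hγ1 : γ ≤ 1) :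
    (∀ t : Fin K,
      (tightF K α γ (insert (Sum.inl t) (Schain K t)) - tightF K α γ (Schain K t) =
        xi K α γ t) ∧
      (∀ j : Fin K,
        tightF K α γ (insert (Sum.inr j) (Schain K t)) - tightF K α γ (Schain K t) =
          xi K α γ t) ∧
      (∀ j : Fin K, t ≤ j →
        tightF K α γ (insert (Sum.inl j) (Schain K t)) - tightF K α γ (Schain K t) =
          xi K α γ j ∧ xi K α γ j ≤ xi K α γ t)) ∧
    (tightF K α γ (Schain K K) =
      (1 / (α * γ)) * (1 - (((K : ℝ) - α * γ) / K) ^ K)) ∧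
    (tightF K α γ (Finset.univ.image (Sum.inr : Fin K → Fin K ⊕ Fin K)) = 1 / γ) ∧
    (tightF K α γ (Schain K K) /
        tightF K α γ (Finset.univ.image (Sum.inr : Fin K → Fin K ⊕ Fin K)) =
      (1 / α) * (1 - (((K : ℝ) - α * γ) / K) ^ K)) := by
  have hK2 : (2:ℝ) ≤ (K:ℝ) := by exact_mod_cast hK
  have hK0 : (K:ℝ) ≠ 0 := by linarith
  have hK1 : (K:ℝ) - 1 ≠ 0 := by linarith
  have hγα : 0 < γ * α := by positivity
  have hγα1 : γ * α ≤ 1 := by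
    calc γ * α ≤ 1 * 1 := by
          apply mul_le_mul hγ1 hα1 (le_of_lt hα0) (by norm_num)
      _ = 1 := by norm_num
  have hq0 : 0 ≤ ((K:ℝ) - γ*α)/K := by
    apply div_nonneg <;> linarith
  have hq1 : ((K:ℝ) - γ*α)/K ≤ 1 := by
    rw [div_le_one (by linarith)]
    linarith
  -- marginal of inserting s_j (j ≥ t)
  have keyL : ∀ (t : ℕ), t ≤ K → ∀ (j : Fin K), t ≤ (j:ℕ) →
      tightF K α γ (insert (Sum.inl j) (Schain K t))
        = xi K α γ j + tightF K α γ (Schain K t) := by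
    intro t ht j hj
    have hfr : (Finset.univ.filter
        (fun i : Fin K => Sum.inr i ∈ insert (Sum.inl j) (Schain K t))) = ∅ := by
      ext i; simp [Schain]
    have hfl : (Finset.univ.filter
        (fun i : Fin K => Sum.inl i ∈ insert (Sum.inl j) (Schain K t)))
          = insert j (Finset.univ.filter (fun i : Fin K => (i:ℕ) < t)) := by
      ext i; simp [Schain]
    have hjnot : j ∉ Finset.univ.filter (fun i : Fin K => (i:ℕ) < t) := by
      simp; omega
    rw [tightF, hfr, hfl, Finset.sum_insert hjnot, tightF_Schain]
    simp [fconv_zero]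
  -- marginal of inserting ω_j
  have keyR : ∀ (t : ℕ), t ≤ K → ∀ (j : Fin K),
      tightF K α γ (insert (Sum.inr j) (Schain K t))
        = (1/(K:ℝ)) * (((K:ℝ) - γ*α)/K)^t + tightF K α γ (Schain K t) := by
    intro t ht j
    have hfr : (Finset.univ.filter
        (fun i : Fin K => Sum.inr i ∈ insert (Sum.inr j) (Schain K t))) = {j} := by
      ext i; simp [Schain]
    have hfl : (Finset.univ.filter
        (fun i : Fin K => Sum.inl i ∈ insert (Sum.inr j) (Schain K t)))
          = Finset.univ.filter (fun i : Fin K => (i:ℕ) < t) := by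
      ext i; simp [Schain]
    rw [tightF, hfr, hfl, tightF_Schain, sum_xi_eq K hK α γ hα0 hγ0 t ht]
    simp only [Finset.card_singleton, Nat.cast_one, fconv_one K hK γ]
    have hαγ : α * γ ≠ 0 := by positivity
    field_simp
    ring
  have hS : tightF K α γ (Schain K K)
      = (1 - (((K:ℝ) - γ*α)/K)^K) / (α * γ) := by
    rw [tightF_Schain, sum_xi_eq K hK α γ hα0 hγ0 K le_rfl]
  have hΩ : tightF K α γ (Finset.univ.image (Sum.inr : Fin K → Fin K ⊕ Fin K)) = 1 / γ := by
    have hfr : (Finset.univ.filter (fun i : Fin K =>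
        Sum.inr i ∈ Finset.univ.image (Sum.inr : Fin K → Fin K ⊕ Fin K)))
          = (Finset.univ : Finset (Fin K)) := by
      ext i; simp
    have hfl : (Finset.univ.filter (fun i : Fin K =>
        Sum.inl i ∈ Finset.univ.image (Sum.inr : Fin K → Fin K ⊕ Fin K)))
          = (∅ : Finset (Fin K)) := by
      ext i; simp
    rw [tightF, hfr, hfl]
    simp only [Finset.sum_empty, mul_zero, sub_zero, mul_one, add_zero, Finset.card_univ,
      Fintype.card_fin]
    rw [fconv]
    have hγ : γ ≠ 0 := ne_of_gt hγ0
    field_simp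
    ring
  have hαγ : α * γ ≠ 0 := by positivity
  refine ⟨?_, ?_, hΩ, ?_⟩
  · intro t
    have ht : (t:ℕ) ≤ K := le_of_lt t.isLt
    have main : ∀ j : Fin K, (t:ℕ) ≤ (j:ℕ) →
        tightF K α γ (insert (Sum.inl j) (Schain K (t:ℕ))) - tightF K α γ (Schain K (t:ℕ)) =
          xi K α γ j ∧ xi K α γ j ≤ xi K α γ t := by
      intro j hj
      constructor
      · rw [keyL (t:ℕ) ht j hj]; ring
      · unfold xi
        apply mul_le_mul_of_nonneg_left _ (by positivity)
        exact pow_le_pow_of_le_one hq0 hq1 hj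
    refine ⟨(main t le_rfl).1, ?_, fun j hj => main j hj⟩
    intro j
    rw [keyR (t:ℕ) ht j]
    unfold xi
    ring
  · rw [hS, show (K:ℝ) - α*γ = (K:ℝ) - γ*α by ring]
    ring
  · rw [hS, hΩ, show (K:ℝ) - α*γ = (K:ℝ) - γ*α by ring]
    have hγ : γ ≠ 0 := ne_of_gt hγ0
    have hα : α ≠ 0 := ne_of_gt hα0
    generalize (1 - (((K:ℝ) - γ*α)/K)^K) = X
    field_simp
end

section
/- Let β, σ > 0, let V be a finite index set, and for each v ∈ V let x_v ∈ ℝ^d with ‖x_v‖₂ = 1. Let c > 0 be such that Σ_{v∈V} x_v x_vᵀ ⪯ c·I_d. Define F_A(S) := tr((β²·I_d)^{−1}) − tr((β²·I_d + σ^{−2}·Σ_{v∈S} x_v x_vᵀ)^{−1}) for S ⊆ V. Then for all Ω, S ⊆ V and every i ∈ S\Ω: F_A(S ∪ Ω) − F_A((S\{i}) ∪ Ω) ≥ (β² / (c·(β² + σ^{−2}c)))·(F_A(S) − F_A(S\{i})); that is, the generalized curvature of F_A is at most 1 − β²/(c(β² + σ^{−2}c)). -/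
open Finset Matrix

/-- The Bayesian A-optimality objective
`F_A(S) = tr((β²I)⁻¹) − tr((β²I + σ⁻²·Σ_{v∈S} x_v x_vᵀ)⁻¹)`. -/
noncomputable def bayesA {V : Type*} [DecidableEq V] (d : ℕ) (β σ : ℝ)
    (x : V → Fin d → ℝ) (S : Finset V) : ℝ :=
  Matrix.trace ((β ^ 2 • (1 : Matrix (Fin d) (Fin d) ℝ))⁻¹) -
    Matrix.trace ((β ^ 2 • (1 : Matrix (Fin d) (Fin d) ℝ) +
      (σ ^ 2)⁻¹ • ∑ v ∈ S, Matrix.vecMulVec (x v) (x v))⁻¹)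

section Helpers

set_option linter.unusedSectionVars false

variable {n : Type*} [Fintype n] [DecidableEq n]

private lemma vecMulVec_mulVec' (y v : n → ℝ) :
    Matrix.vecMulVec y y *ᵥ v = (y ⬝ᵥ v) • y := by
  ext i
  simp only [Matrix.mulVec, Matrix.vecMulVec_apply, dotProduct, Pi.smul_apply,
    smul_eq_mul]
  rw [Finset.sum_mul]
  exact Finset.sum_congr rfl fun j _ => by ring

private lemma posSemidef_vecMulVec' (y : n → ℝ) : (Matrix.vecMulVec y y).PosSemidef := by
  refine Matrix.PosSemidef.of_dotProduct_mulVec_nonneg ?_ ?_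
  · ext i j
    simp [Matrix.conjTranspose_apply, Matrix.vecMulVec_apply, mul_comm]
  · intro v
    rw [vecMulVec_mulVec']
    simp only [star_trivial, dotProduct_smul, smul_eq_mul]
    rw [dotProduct_comm]
    exact mul_self_nonneg _

private lemma dotProduct_self_nonneg' (v : n → ℝ) : 0 ≤ v ⬝ᵥ v :=
  Finset.sum_nonneg fun i _ => mul_self_nonneg _

private lemma isHermitian_smul_real {M : Matrix n n ℝ} (hM : M.IsHermitian) (a : ℝ) :
    (a • M).IsHermitian := by
  show (a • M)ᴴ = a • M
  have h1 : (a • M)ᴴ = a • Mᴴ := by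
    ext i j
    simp [Matrix.conjTranspose_apply]
  rw [h1, hM.eq]

private lemma dot_mulVec_symm {M : Matrix n n ℝ} (hM : M.IsHermitian) (a b : n → ℝ) :
    a ⬝ᵥ (M *ᵥ b) = b ⬝ᵥ (M *ᵥ a) := by
  have hT : Mᵀ = M := by
    have h := hM.eq
    rwa [Matrix.conjTranspose_eq_transpose_of_trivial] at h
  rw [Matrix.dotProduct_mulVec, ← Matrix.mulVec_transpose, dotProduct_comm, hT]

private lemma psd_nonneg {M : Matrix n n ℝ} (hM : M.PosSemidef) (v : n → ℝ) :
    0 ≤ v ⬝ᵥ (M *ᵥ v) := by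
  simpa using hM.dotProduct_mulVec_nonneg v

/-- Cauchy–Schwarz for a positive semidefinite quadratic form. -/
private lemma psd_cauchy_schwarz {M : Matrix n n ℝ} (hM : M.PosSemidef) (a b : n → ℝ) :
    (a ⬝ᵥ (M *ᵥ b)) ^ 2 ≤ (a ⬝ᵥ (M *ᵥ a)) * (b ⬝ᵥ (M *ᵥ b)) := by
  have key : ∀ t : ℝ,
      0 ≤ (b ⬝ᵥ (M *ᵥ b)) * (t * t) + (2 * (a ⬝ᵥ (M *ᵥ b))) * t + a ⬝ᵥ (M *ᵥ a) := by
    intro t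
    have h := psd_nonneg hM (a + t • b)
    have hsym : b ⬝ᵥ (M *ᵥ a) = a ⬝ᵥ (M *ᵥ b) := dot_mulVec_symm hM.isHermitian b a
    rw [Matrix.mulVec_add, Matrix.mulVec_smul] at h
    simp only [add_dotProduct, smul_dotProduct, dotProduct_add,
      dotProduct_smul, smul_eq_mul] at h
    rw [hsym] at h
    have heq : (b ⬝ᵥ (M *ᵥ b)) * (t * t) + (2 * (a ⬝ᵥ (M *ᵥ b))) * t + a ⬝ᵥ (M *ᵥ a)
        = a ⬝ᵥ (M *ᵥ a) + t * (a ⬝ᵥ (M *ᵥ b)) + t * (a ⬝ᵥ (M *ᵥ b) + t * (b ⬝ᵥ (M *ᵥ b))) := by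
      ring
    rw [heq]
    convert h using 2 <;> ring
  have hd := discrim_le_zero key
  rw [discrim] at hd
  linarith [hd]

/-- Sherman–Morrison-type marginal gain formula for the trace of the inverse. -/
private lemma trace_inv_sub_trace_inv (P : Matrix n n ℝ) (hP : P.PosDef) (y : n → ℝ) :
    Matrix.trace P⁻¹ - Matrix.trace (P + Matrix.vecMulVec y y)⁻¹
      = ((P⁻¹ *ᵥ y) ⬝ᵥ (P⁻¹ *ᵥ y)) / (1 + y ⬝ᵥ (P⁻¹ *ᵥ y)) := by
  set w := P⁻¹ *ᵥ y with hw
  set q := y ⬝ᵥ w with hq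
  set Q := P + Matrix.vecMulVec y y with hQ
  have hQpd : Q.PosDef := hP.add_posSemidef (posSemidef_vecMulVec' y)
  have hdP : IsUnit P.det := hP.det_pos.ne'.isUnit
  have hdQ : IsUnit Q.det := hQpd.det_pos.ne'.isUnit
  have hq0 : 0 ≤ q := by
    have := psd_nonneg hP.inv.posSemidef y
    simpa [hq, hw] using this
  have h1q : (0:ℝ) < 1 + q := by linarith
  have hPw : P *ᵥ w = y := by
    rw [hw, Matrix.mulVec_mulVec, Matrix.mul_nonsing_inv _ hdP, Matrix.one_mulVec]
  -- Sherman–Morrison for the inverse applied to y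
  have hSM : Q⁻¹ *ᵥ y = (1 + q)⁻¹ • w := by
    have h2 : Q *ᵥ w = (1 + q) • y := by
      rw [hQ, Matrix.add_mulVec, hPw, vecMulVec_mulVec', ← hq]
      ext i; simp; ring
    have h3 : Q⁻¹ *ᵥ ((1 + q) • y) = w := by
      rw [← h2, Matrix.mulVec_mulVec, Matrix.nonsing_inv_mul _ hdQ, Matrix.one_mulVec]
    rw [Matrix.mulVec_smul] at h3
    rw [← h3, smul_smul, inv_mul_cancel₀ h1q.ne', one_smul]
  -- matrix identity P⁻¹ - Q⁻¹ = P⁻¹ * (yyᵀ) * Q⁻¹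
  have hid : P⁻¹ - Q⁻¹ = P⁻¹ * Matrix.vecMulVec y y * Q⁻¹ := by
    have h4 : P⁻¹ * (Q - P) * Q⁻¹ = P⁻¹ - Q⁻¹ := by
      rw [Matrix.mul_sub, Matrix.sub_mul, Matrix.mul_assoc,
        Matrix.mul_nonsing_inv _ hdQ, Matrix.mul_one, Matrix.nonsing_inv_mul _ hdP,
        Matrix.one_mul]
    rw [← h4, hQ, add_sub_cancel_left]
  -- trace of a rank-one product
  have htr : ∀ A : Matrix n n ℝ, Matrix.trace (A * Matrix.vecMulVec y y) = y ⬝ᵥ (A *ᵥ y) := by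
    intro A
    simp only [Matrix.trace, Matrix.diag, Matrix.mul_apply, Matrix.vecMulVec_apply,
      dotProduct, Matrix.mulVec]
    refine Finset.sum_congr rfl fun i _ => ?_
    rw [Finset.mul_sum]
    exact Finset.sum_congr rfl fun j _ => by ring
  have step : Matrix.trace P⁻¹ - Matrix.trace Q⁻¹ = w ⬝ᵥ (Q⁻¹ *ᵥ y) := by
    rw [← Matrix.trace_sub, hid, Matrix.trace_mul_comm, ← Matrix.mul_assoc, htr,
      ← Matrix.mulVec_mulVec, ← hw]
    exact dot_mulVec_symm hQpd.inv.isHermitian y w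
  rw [step, hSM, dotProduct_smul, smul_eq_mul, div_eq_inv_mul]

end Helpers

set_option maxHeartbeats 1000000 in
/-- **Curvature bound for Bayesian A-optimality.** If the stimuli are normalized
(`‖x_v‖₂ = 1`) and `Σ_{v∈V} x_v x_vᵀ ⪯ c·I` with `c > 0`, then for all
`Ω, S ⊆ V` and `i ∈ S\Ω`,
`F_A(S ∪ Ω) − F_A((S\{i}) ∪ Ω) ≥ (β²/(c(β² + σ⁻²c)))·(F_A(S) − F_A(S\{i}))`,
i.e. the generalized curvature of `F_A` is at most `1 − β²/(c(β² + σ⁻²c))`. -/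
theorem bayesA_curvature {V : Type*} [DecidableEq V] [Fintype V]
    (d : ℕ) (β σ c : ℝ) (hβ : 0 < β) (hσ : 0 < σ) (hc : 0 < c)
    (x : V → Fin d → ℝ)
    (hnorm : ∀ v : V, ∑ i, (x v i) ^ 2 = 1)
    (hbound : (c • (1 : Matrix (Fin d) (Fin d) ℝ) -
      ∑ v ∈ Finset.univ, Matrix.vecMulVec (x v) (x v)).PosSemidef) :
    ∀ Ω S : Finset V, ∀ i ∈ S, i ∉ Ω →
      bayesA d β σ x (S ∪ Ω) - bayesA d β σ x ((S.erase i) ∪ Ω) ≥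
        (β ^ 2 / (c * (β ^ 2 + (σ ^ 2)⁻¹ * c))) *
          (bayesA d β σ x S - bayesA d β σ x (S.erase i)) := by
  intro Ω S i hiS hiΩ
  set s2 : ℝ := (σ ^ 2)⁻¹ with hs2
  have hs2pos : 0 < s2 := by rw [hs2]; positivity
  have hβ2 : (0:ℝ) < β ^ 2 := by positivity
  have hs2' : s2 = σ⁻¹ * σ⁻¹ := by rw [hs2, sq, mul_inv]
  set u : Fin d → ℝ := x i with hu
  have huu : u ⬝ᵥ u = 1 := by
    rw [hu, dotProduct, ← hnorm i]
    exact Finset.sum_congr rfl fun j _ => (sq (x i j)).symm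
  set y : Fin d → ℝ := σ⁻¹ • u with hy
  have hyy : y ⬝ᵥ y = s2 := by
    rw [hy, smul_dotProduct, dotProduct_smul, huu, hs2']
    simp
  have hvmv : Matrix.vecMulVec y y = s2 • Matrix.vecMulVec u u := by
    rw [hy, hs2']
    ext a b
    simp only [Matrix.vecMulVec_apply, Pi.smul_apply, smul_eq_mul, Matrix.smul_apply]
    ring
  -- the information matrices
  set Mat : Finset V → Matrix (Fin d) (Fin d) ℝ := fun T =>
    β ^ 2 • (1 : Matrix (Fin d) (Fin d) ℝ) + s2 • ∑ v ∈ T, Matrix.vecMulVec (x v) (x v)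
    with hMat
  have hsumPSD : ∀ T : Finset V, (∑ v ∈ T, Matrix.vecMulVec (x v) (x v)).PosSemidef := by
    intro T
    refine Finset.sum_induction _ _ (fun a b ha hb => ha.add hb) Matrix.PosSemidef.zero ?_
    exact fun v _ => posSemidef_vecMulVec' (x v)
  have hsmulPSD : ∀ (a : ℝ) (M : Matrix (Fin d) (Fin d) ℝ), 0 ≤ a → M.PosSemidef →
      (a • M).PosSemidef := by
    intro a M ha hM
    refine Matrix.PosSemidef.of_dotProduct_mulVec_nonneg (isHermitian_smul_real hM.isHermitian a) fun v => ?_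
    rw [Matrix.smul_mulVec, dotProduct_smul, smul_eq_mul]
    exact mul_nonneg ha (hM.dotProduct_mulVec_nonneg v)
  have hMatPD : ∀ T : Finset V, (Mat T).PosDef := by
    intro T
    rw [hMat]
    apply Matrix.PosDef.add_posSemidef
    · refine Matrix.PosDef.of_dotProduct_mulVec_pos (isHermitian_smul_real Matrix.isHermitian_one _) fun v hv => ?_
      rw [Matrix.smul_mulVec, Matrix.one_mulVec, dotProduct_smul, smul_eq_mul]
      have hv' : (0:ℝ) < star v ⬝ᵥ v := Matrix.dotProduct_star_self_pos_iff.mpr hv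
      exact mul_pos hβ2 hv'
    · exact hsmulPSD _ _ hs2pos.le (hsumPSD T)
  -- the sets
  set B : Finset V := S.erase i with hB
  set A : Finset V := B ∪ Ω with hA
  have hiB : i ∉ B := by rw [hB]; exact Finset.notMem_erase i S
  have hiA : i ∉ A := by
    rw [hA, Finset.mem_union]
    push_neg
    exact ⟨hiB, hiΩ⟩
  have hSins : S = insert i B := by rw [hB]; exact (Finset.insert_erase hiS).symm
  have hSΩins : S ∪ Ω = insert i A := by
    rw [hA, ← Finset.insert_union, ← hSins]
  have hMatInsert : ∀ T : Finset V, i ∉ T →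
      Mat (insert i T) = Mat T + Matrix.vecMulVec y y := by
    intro T hiT
    rw [hMat]
    simp only
    rw [Finset.sum_insert hiT, smul_add, hvmv, ← hu]
    abel
  -- bayesA differences are marginal trace gains
  have hgain : ∀ T : Finset V, i ∉ T →
      bayesA d β σ x (insert i T) - bayesA d β σ x T =
        Matrix.trace (Mat T)⁻¹ - Matrix.trace (Mat T + Matrix.vecMulVec y y)⁻¹ := by
    intro T hiT
    rw [bayesA, bayesA, ← hMatInsert T hiT]
    have e1 : β ^ 2 • (1 : Matrix (Fin d) (Fin d) ℝ) +
        (σ ^ 2)⁻¹ • ∑ v ∈ insert i T, Matrix.vecMulVec (x v) (x v) = Mat (insert i T) := by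
      rw [hMat, ← hs2]
    have e2 : β ^ 2 • (1 : Matrix (Fin d) (Fin d) ℝ) +
        (σ ^ 2)⁻¹ • ∑ v ∈ T, Matrix.vecMulVec (x v) (x v) = Mat T := by
      rw [hMat, ← hs2]
    rw [e1, e2]
    ring
  set N : Matrix (Fin d) (Fin d) ℝ := Mat B with hN
  set M : Matrix (Fin d) (Fin d) ℝ := Mat A with hM
  have hNpd : N.PosDef := by rw [hN]; exact hMatPD B
  have hMpd : M.PosDef := by rw [hM]; exact hMatPD A
  set w : Fin d → ℝ := N⁻¹ *ᵥ y with hw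
  set z : Fin d → ℝ := M⁻¹ *ᵥ y with hz
  set qB : ℝ := y ⬝ᵥ w with hqB
  set qA : ℝ := y ⬝ᵥ z with hqA
  have hΔB : Matrix.trace N⁻¹ - Matrix.trace (N + Matrix.vecMulVec y y)⁻¹
      = (w ⬝ᵥ w) / (1 + qB) := by
    rw [hqB, hw]; exact trace_inv_sub_trace_inv N hNpd y
  have hΔA : Matrix.trace M⁻¹ - Matrix.trace (M + Matrix.vecMulVec y y)⁻¹
      = (z ⬝ᵥ z) / (1 + qA) := by
    rw [hqA, hz]; exact trace_inv_sub_trace_inv M hMpd y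
  have hqB0 : 0 ≤ qB := by
    have := psd_nonneg hNpd.inv.posSemidef y
    rw [hqB, hw]
    exact this
  have hqA0 : 0 ≤ qA := by
    have := psd_nonneg hMpd.inv.posSemidef y
    rw [hqA, hz]
    exact this
  have hNw : N *ᵥ w = y := by
    rw [hw, Matrix.mulVec_mulVec, Matrix.mul_nonsing_inv _ hNpd.det_pos.ne'.isUnit,
      Matrix.one_mulVec]
  have hMz : M *ᵥ z = y := by
    rw [hz, Matrix.mulVec_mulVec, Matrix.mul_nonsing_inv _ hMpd.det_pos.ne'.isUnit,
      Matrix.one_mulVec]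
  -- from here on, forget all definitions: only the established equations matter
  clear_value s2 u y Mat B A N M w z qB qA
  -- Bounds for the small-set gain: β² qB ≤ s2  and  β² (w⬝w) ≤ qB
  obtain ⟨g, hg⟩ : ∃ g, g = (s2 • ∑ v ∈ B, Matrix.vecMulVec (x v) (x v)) *ᵥ w := ⟨_, rfl⟩
  have hyg : y = g + β ^ 2 • w := by
    rw [← hNw, hN, hMat]
    simp only
    rw [Matrix.add_mulVec, Matrix.smul_mulVec, Matrix.one_mulVec, hg]
    abel
  have hgw : 0 ≤ w ⬝ᵥ g := by
    have := psd_nonneg (hsmulPSD _ _ hs2pos.le (hsumPSD B)) w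
    rw [← hg] at this
    exact this
  have hgg : 0 ≤ g ⬝ᵥ g := dotProduct_self_nonneg' g
  have hww : 0 ≤ w ⬝ᵥ w := dotProduct_self_nonneg' w
  have hcomm : g ⬝ᵥ w = w ⬝ᵥ g := dotProduct_comm g w
  have hyy_expand : s2 = g ⬝ᵥ g + 2 * β ^ 2 * (w ⬝ᵥ g) + β ^ 2 * β ^ 2 * (w ⬝ᵥ w) := by
    have h0 : y ⬝ᵥ y = (g + β ^ 2 • w) ⬝ᵥ (g + β ^ 2 • w) := by rw [← hyg]
    rw [hyy] at h0
    simp only [add_dotProduct, dotProduct_add, smul_dotProduct,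
      dotProduct_smul, smul_eq_mul] at h0
    rw [hcomm] at h0
    linarith [h0]
  have hqB_expand : qB = w ⬝ᵥ g + β ^ 2 * (w ⬝ᵥ w) := by
    have h0 : qB = y ⬝ᵥ w := hqB
    rw [hyg] at h0
    simp only [add_dotProduct, smul_dotProduct, smul_eq_mul] at h0
    rw [hcomm] at h0
    linarith [h0]
  have hqB_up : β ^ 2 * qB ≤ s2 := by
    have hkey : s2 - β ^ 2 * qB = g ⬝ᵥ g + β ^ 2 * (w ⬝ᵥ g) := by
      rw [hyy_expand, hqB_expand]; ring
    have h1 : 0 ≤ β ^ 2 * (w ⬝ᵥ g) := mul_nonneg hβ2.le hgw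
    linarith [hgg, h1, hkey]
  have hwB_up : β ^ 2 * (w ⬝ᵥ w) ≤ qB := by linarith [hqB_expand, hgw]
  -- spectral-type bounds from Σ_V ⪯ c I :  u ⬝ Σ_A u ≤ c - 1  and  1 ≤ c
  have hsum_split : (∑ v ∈ Finset.univ \ insert i A, Matrix.vecMulVec (x v) (x v)) +
      (∑ v ∈ insert i A, Matrix.vecMulVec (x v) (x v)) =
      ∑ v ∈ Finset.univ, Matrix.vecMulVec (x v) (x v) :=
    Finset.sum_sdiff (Finset.subset_univ _)
  have hbd : 0 ≤ u ⬝ᵥ ((c • (1 : Matrix (Fin d) (Fin d) ℝ) -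
      ∑ v ∈ Finset.univ, Matrix.vecMulVec (x v) (x v)) *ᵥ u) := psd_nonneg hbound u
  have hbd' : u ⬝ᵥ ((∑ v ∈ Finset.univ, Matrix.vecMulVec (x v) (x v)) *ᵥ u) ≤ c := by
    rw [Matrix.sub_mulVec, dotProduct_sub, Matrix.smul_mulVec,
      Matrix.one_mulVec, dotProduct_smul, huu] at hbd
    simp only [smul_eq_mul, mul_one] at hbd
    linarith
  have hins_split : u ⬝ᵥ ((∑ v ∈ insert i A, Matrix.vecMulVec (x v) (x v)) *ᵥ u) =
      1 + u ⬝ᵥ ((∑ v ∈ A, Matrix.vecMulVec (x v) (x v)) *ᵥ u) := by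
    rw [Finset.sum_insert hiA, Matrix.add_mulVec, dotProduct_add, ← hu,
      vecMulVec_mulVec', dotProduct_smul, huu]
    simp
  have huniv_split : u ⬝ᵥ ((∑ v ∈ Finset.univ, Matrix.vecMulVec (x v) (x v)) *ᵥ u) =
      u ⬝ᵥ ((∑ v ∈ Finset.univ \ insert i A, Matrix.vecMulVec (x v) (x v)) *ᵥ u) +
      u ⬝ᵥ ((∑ v ∈ insert i A, Matrix.vecMulVec (x v) (x v)) *ᵥ u) := by
    rw [← hsum_split, Matrix.add_mulVec, dotProduct_add]
  have hrest : 0 ≤ u ⬝ᵥ ((∑ v ∈ Finset.univ \ insert i A, Matrix.vecMulVec (x v) (x v)) *ᵥ u) :=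
    psd_nonneg (hsumPSD _) u
  have hsA_nonneg : 0 ≤ u ⬝ᵥ ((∑ v ∈ A, Matrix.vecMulVec (x v) (x v)) *ᵥ u) :=
    psd_nonneg (hsumPSD A) u
  have hsA_le : u ⬝ᵥ ((∑ v ∈ A, Matrix.vecMulVec (x v) (x v)) *ᵥ u) ≤ c - 1 := by
    rw [huniv_split, hins_split] at hbd'
    linarith
  have hc1 : 1 ≤ c := by
    rw [huniv_split, hins_split] at hbd'
    linarith
  -- m := β² + s2(c-1); y ⬝ M y ≤ s2 * m
  obtain ⟨m, hm⟩ : ∃ m : ℝ, m = β ^ 2 + s2 * (c - 1) := ⟨_, rfl⟩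
  have hmpos : 0 < m := by
    have h0 := mul_nonneg hs2pos.le (sub_nonneg.mpr hc1)
    rw [hm]; linarith
  have hyMy : y ⬝ᵥ (M *ᵥ y) ≤ s2 * m := by
    have huMu : u ⬝ᵥ (M *ᵥ u) ≤ m := by
      rw [hM, hMat]
      simp only
      rw [Matrix.add_mulVec, dotProduct_add, Matrix.smul_mulVec,
        Matrix.one_mulVec, dotProduct_smul, huu, Matrix.smul_mulVec,
        dotProduct_smul, hm]
      simp only [smul_eq_mul, mul_one]
      have := mul_le_mul_of_nonneg_left hsA_le hs2pos.le
      linarith [this]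
    have hexp : y ⬝ᵥ (M *ᵥ y) = s2 * (u ⬝ᵥ (M *ᵥ u)) := by
      rw [hy, Matrix.mulVec_smul, smul_dotProduct, dotProduct_smul, hs2']
      simp only [smul_eq_mul]
      ring
    rw [hexp]
    exact mul_le_mul_of_nonneg_left huMu hs2pos.le
  -- Cauchy-Schwarz: s2² ≤ (y⬝My) * qA,  so s2 ≤ m * qA
  have hCS1 : s2 ^ 2 ≤ (y ⬝ᵥ (M *ᵥ y)) * qA := by
    have h := psd_cauchy_schwarz hMpd.posSemidef y z
    rw [hMz, hyy, dotProduct_comm z y, ← hqA] at h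
    exact h
  have hqA_low : s2 ≤ m * qA := by
    have h1 : (y ⬝ᵥ (M *ᵥ y)) * qA ≤ (s2 * m) * qA := mul_le_mul_of_nonneg_right hyMy hqA0
    have h2 : s2 * s2 ≤ s2 * (m * qA) := by
      calc s2 * s2 = s2 ^ 2 := (sq s2).symm
        _ ≤ (y ⬝ᵥ (M *ᵥ y)) * qA := hCS1
        _ ≤ (s2 * m) * qA := h1
        _ = s2 * (m * qA) := by ring
    exact le_of_mul_le_mul_left h2 hs2pos
  -- Cauchy-Schwarz: qA² ≤ s2 * (z⬝z)
  have hCS2 : qA ^ 2 ≤ s2 * (z ⬝ᵥ z) := by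
    have h := psd_cauchy_schwarz (Matrix.PosSemidef.one (n := Fin d) (R := ℝ)) y z
    simp only [Matrix.one_mulVec] at h
    rw [hyy] at h
    rw [hqA]
    exact h
  have hzz : 0 ≤ z ⬝ᵥ z := dotProduct_self_nonneg' z
  have hqB1 : (0:ℝ) < 1 + qB := by linarith
  have hqA1 : (0:ℝ) < 1 + qA := by linarith
  -- the two final bounds on the marginal gains
  have hsmall : (w ⬝ᵥ w) / (1 + qB) ≤ s2 / (β ^ 2 * (β ^ 2 + s2)) := by
    rw [div_le_div_iff₀ hqB1 (by positivity)]
    have h1 : (β ^ 2 + s2) * (β ^ 2 * (w ⬝ᵥ w)) ≤ (β ^ 2 + s2) * qB :=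
      mul_le_mul_of_nonneg_left hwB_up (by positivity)
    have h2 : 0 ≤ s2 * qB := mul_nonneg hs2pos.le hqB0
    linarith [h1, hqB_up, h2]
  have hbig : s2 / (m * (m + s2)) ≤ (z ⬝ᵥ z) / (1 + qA) := by
    rw [div_le_div_iff₀ (by positivity) hqA1]
    have hCS2' : qA * qA ≤ s2 * (z ⬝ᵥ z) := by
      calc qA * qA = qA ^ 2 := (sq qA).symm
        _ ≤ s2 * (z ⬝ᵥ z) := hCS2
    have e4 : s2 * qA ≤ m * qA * qA := by
      calc s2 * qA ≤ (m * qA) * qA := mul_le_mul_of_nonneg_right hqA_low hqA0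
        _ = m * qA * qA := by ring
    have e5 : m * (qA * qA) ≤ m * (s2 * (z ⬝ᵥ z)) := mul_le_mul_of_nonneg_left hCS2' hmpos.le
    have e1 : qA ≤ m * (z ⬝ᵥ z) := by
      have h6 : qA * s2 ≤ (m * (z ⬝ᵥ z)) * s2 := by linarith [e4, e5]
      exact le_of_mul_le_mul_right h6 hs2pos
    have e3 : m * qA ≤ m * (m * (z ⬝ᵥ z)) := mul_le_mul_of_nonneg_left e1 hmpos.le
    linarith [hqA_low, e3, e4, e5]
  -- rewrite the goal
  have hgoalL : bayesA d β σ x (S ∪ Ω) - bayesA d β σ x A = (z ⬝ᵥ z) / (1 + qA) := by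
    rw [hSΩins, hgain A hiA, ← hM, hΔA]
  have hgoalR : bayesA d β σ x S - bayesA d β σ x B = (w ⬝ᵥ w) / (1 + qB) := by
    nth_rewrite 1 [hSins]
    rw [hgain B hiB, ← hN, hΔB]
  rw [ge_iff_le, hgoalL, hgoalR]
  -- final arithmetic
  obtain ⟨ρ, hρ⟩ : ∃ ρ : ℝ, ρ = β ^ 2 / (c * (β ^ 2 + s2 * c)) := ⟨_, rfl⟩
  rw [← hρ]
  have hρ0 : 0 ≤ ρ := by rw [hρ]; positivity
  calc ρ * ((w ⬝ᵥ w) / (1 + qB)) ≤ ρ * (s2 / (β ^ 2 * (β ^ 2 + s2))) :=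
        mul_le_mul_of_nonneg_left hsmall hρ0
    _ ≤ s2 / (m * (m + s2)) := by
        rw [hρ, div_mul_div_comm, div_le_div_iff₀ (by positivity) (by positivity)]
        have hms : m + s2 = β ^ 2 + s2 * c := by rw [hm]; ring
        rw [hms]
        have hkey : m ≤ c * (β ^ 2 + s2) := by
          have h7 : 0 ≤ β ^ 2 * (c - 1) := mul_nonneg hβ2.le (sub_nonneg.mpr hc1)
          rw [hm]; linarith [h7, hs2pos]
        have hfac : (0:ℝ) ≤ s2 * (β ^ 2 * (β ^ 2 + s2 * c)) := by positivity
        have h8 := mul_le_mul_of_nonneg_left hkey hfac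
        linarith [h8]
    _ ≤ (z ⬝ᵥ z) / (1 + qA) := hbig
end
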